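/- Let a, b, c ≥ 0, r > 0 and g(x) = max( a·x, √(b·x³ + c·x²) ). Then the fixed point δ(g,r) = inf{ δ ≥ 0 : ∀ x ≥ δ, g(x) ≤ r x² } satisfies δ(g,r)² ≤ max( a²/r², b²/r⁴ + 2c/r² ) ≤ a²/r² + b²/r⁴ + 2c/r². -/

import Mathlib

open Set

/-- Lemma (fixed_pt): for `a, b, c ≥ 0`, `r > 0` and
`g x = max (a x) (√(b x³ + c x²))`, the fixed point
`δ(g,r) = inf {δ ≥ 0 : ∀ x ≥ δ, g x ≤ r x²}` satisfies
`δ(g,r)² ≤ max (a²/r²) (b²/r⁴ + 2c/r²) ≤ a²/r² + b²/r⁴ + 2c/r²`. -/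
theorem stmt_4 (a b c r : ℝ) (ha : 0 ≤ a) (hb : 0 ≤ b) (hc : 0 ≤ c) (hr : 0 < r)
    (S : Set ℝ)
    (hS : S = {d : ℝ | 0 ≤ d ∧ ∀ x, d ≤ x →
      max (a * x) (Real.sqrt (b * x ^ 3 + c * x ^ 2)) ≤ r * x ^ 2}) :
    (sInf S) ^ 2 ≤ max (a ^ 2 / r ^ 2) (b ^ 2 / r ^ 4 + 2 * c / r ^ 2) ∧
      max (a ^ 2 / r ^ 2) (b ^ 2 / r ^ 4 + 2 * c / r ^ 2)
        ≤ a ^ 2 / r ^ 2 + b ^ 2 / r ^ 4 + 2 * c / r ^ 2 := by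
  have hr2 : (0:ℝ) < r ^ 2 := by positivity
  set M := max (a ^ 2 / r ^ 2) (b ^ 2 / r ^ 4 + 2 * c / r ^ 2) with hM
  have hM0 : 0 ≤ M := le_trans (by positivity) (le_max_left _ _)
  set δ := Real.sqrt M with hδ
  have hδ0 : 0 ≤ δ := Real.sqrt_nonneg _
  have hδsq : δ ^ 2 = M := Real.sq_sqrt hM0
  have hmem : δ ∈ S := by
    rw [hS]
    refine ⟨hδ0, fun x hx => ?_⟩
    have hx0 : 0 ≤ x := le_trans hδ0 hx
    have hx2 : M ≤ x ^ 2 := by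
      calc M = δ ^ 2 := hδsq.symm
      _ ≤ x ^ 2 := by nlinarith
    have h1 : a ^ 2 / r ^ 2 ≤ x ^ 2 := le_trans (le_max_left _ _) hx2
    have h2 : b ^ 2 / r ^ 4 + 2 * c / r ^ 2 ≤ x ^ 2 := le_trans (le_max_right _ _) hx2
    have h1' : a ^ 2 ≤ r ^ 2 * x ^ 2 := by
      rw [div_le_iff₀ hr2] at h1; linarith
    have h2' : b ^ 2 + 2 * c * r ^ 2 ≤ r ^ 4 * x ^ 2 := by
      have hr4 : (0:ℝ) < r ^ 4 := by positivity
      have := (add_div (b^2) (0:ℝ))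
      have h2'' : (b ^ 2 + 2 * c * r ^ 2) / r ^ 4 ≤ x ^ 2 := by
        have : b ^ 2 / r ^ 4 + 2 * c / r ^ 2 = (b ^ 2 + 2 * c * r ^ 2) / r ^ 4 := by
          field_simp
        linarith [this ▸ h2]
      rw [div_le_iff₀ hr4] at h2''; linarith
    apply max_le
    · -- a * x ≤ r * x ^ 2
      have hax : a ≤ r * x := by nlinarith [mul_nonneg hr.le hx0, sq_nonneg (a - r * x)]
      nlinarith
    · have hbc : b * x ^ 3 + c * x ^ 2 ≤ (r * x ^ 2) ^ 2 := by
        nlinarith [sq_nonneg (b * x - r ^ 2 * x ^ 2), mul_nonneg (mul_nonneg hb hx0) (sq_nonneg x), sq_nonneg x, mul_le_mul_of_nonneg_left h2' (sq_nonneg x)]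
      calc Real.sqrt (b * x ^ 3 + c * x ^ 2) ≤ Real.sqrt ((r * x ^ 2) ^ 2) :=
            Real.sqrt_le_sqrt hbc
        _ = r * x ^ 2 := Real.sqrt_sq (by positivity)
  have hbdd : ∀ y ∈ S, (0:ℝ) ≤ y := by
    intro y hy; rw [hS] at hy; exact hy.1
  have hinf_le : sInf S ≤ δ := csInf_le ⟨0, hbdd⟩ hmem
  have hinf_nonneg : 0 ≤ sInf S := le_csInf ⟨δ, hmem⟩ hbdd
  constructor
  · calc (sInf S) ^ 2 ≤ δ ^ 2 := by nlinarith
    _ = M := hδsq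
  · apply max_le
    · have : (0:ℝ) ≤ b ^ 2 / r ^ 4 + 2 * c / r ^ 2 := by positivity
      linarith
    · have : (0:ℝ) ≤ a ^ 2 / r ^ 2 := by positivity
      linarith
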